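/- Let λ ∈ ℝ with λ > -1/2, and for u ∈ [-1,1] define h(u) := μ_λ({t ∈ [-1,1] : t > u}) - μ_{λ+1}({t ∈ [-1,1] : t > u}). Then h(u) ≤ 0 for all u ∈ [-1,0] and h(u) ≥ 0 for all u ∈ [0,1]. -/

import Mathlib

open MeasureTheory Set

/-- The normalizing constant `c_m = Γ(m/2+1)/(2 Γ(1/2) Γ(m/2+1/2))`. -/
noncomputable def cConst (m : ℝ) : ℝ :=
  Real.Gamma (m / 2 + 1) / (2 * Real.Gamma (1 / 2) * Real.Gamma (m / 2 + 1 / 2))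

/-- The probability measure `μ_λ` on `[-1,1]` with density `2 c_{2λ} (1-t²)^{λ-1/2}`
with respect to Lebesgue measure. -/
noncomputable def muMeasure (l : ℝ) : Measure ℝ :=
  (volume.restrict (Set.Icc (-1 : ℝ) 1)).withDensity
    (fun t => ENNReal.ofReal (2 * cConst (2 * l) * (1 - t ^ 2) ^ (l - 1 / 2)))

lemma cConst_pos {m : ℝ} (hm : -1 < m) : 0 < cConst m := by
  have h1 : 0 < Real.Gamma (m / 2 + 1) := Real.Gamma_pos_of_pos (by linarith)
  have h2 : 0 < Real.Gamma (1 / 2 : ℝ) := Real.Gamma_pos_of_pos (by norm_num)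
  have h3 : 0 < Real.Gamma (m / 2 + 1 / 2) := Real.Gamma_pos_of_pos (by linarith)
  unfold cConst
  positivity

lemma gamma_key {l : ℝ} (hl : -1 / 2 < l) :
    cConst (2 * (l + 1)) * (l + 1 / 2) = cConst (2 * l) * (l + 1) := by
  unfold cConst
  rw [show 2 * (l + 1) / 2 + 1 = (l + 1) + 1 by ring,
      show 2 * (l + 1) / 2 + 1 / 2 = (l + 1 / 2) + 1 by ring,
      Real.Gamma_add_one (by linarith : l + 1 ≠ 0),
      Real.Gamma_add_one (by linarith : l + 1 / 2 ≠ 0),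
      show 2 * l / 2 + 1 = l + 1 by ring, show 2 * l / 2 + 1 / 2 = l + 1 / 2 by ring]
  have hG : (0:ℝ) < Real.Gamma (1 / 2 : ℝ) := Real.Gamma_pos_of_pos (by norm_num)
  have hG2 : (0:ℝ) < Real.Gamma (l + 1 / 2) := Real.Gamma_pos_of_pos (by linarith)
  have hd1 : 2 * Real.Gamma (1 / 2 : ℝ) * ((l + 1 / 2) * Real.Gamma (l + 1 / 2)) ≠ 0 :=
    (mul_pos (mul_pos two_pos hG) (mul_pos (by linarith) hG2)).ne'
  have hd2 : 2 * Real.Gamma (1 / 2 : ℝ) * Real.Gamma (l + 1 / 2) ≠ 0 :=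
    (mul_pos (mul_pos two_pos hG) hG2).ne'
  rw [div_mul_eq_mul_div, div_mul_eq_mul_div, div_eq_div_iff hd1 hd2]
  ring

lemma integrableOn_base {p : ℝ} (hp : -1 < p) :
    IntegrableOn (fun t : ℝ => (1 - t ^ 2) ^ p) (Ioc (-1 : ℝ) 1) volume := by
  have h01 : IntegrableOn (fun t : ℝ => (1 - t ^ 2) ^ p) (Ioc (0 : ℝ) 1) volume := by
    rw [integrableOn_Ioc_iff_integrableOn_Ioo]
    have hcont : ContinuousOn (fun t : ℝ => (1 - t ^ 2) ^ p) (Ioo (0 : ℝ) 1) := by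
      refine ContinuousOn.rpow_const (continuousOn_const.sub (continuous_pow 2).continuousOn) ?_
      intro t ht
      exact Or.inl (by nlinarith [ht.1, ht.2] : (1:ℝ) - t ^ 2 ≠ 0)
    have h : IntervalIntegrable (fun x : ℝ => x ^ p) volume 0 1 :=
      intervalIntegral.intervalIntegrable_rpow' hp
    have h2 := (h.comp_sub_left 1).symm
    simp only [sub_self, sub_zero] at h2
    have hsing : IntegrableOn (fun x : ℝ => (1 - x) ^ p) (Ioo (0 : ℝ) 1) volume := by
      refine IntegrableOn.mono_set ?_ Ioo_subset_Ioc_self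
      rw [← intervalIntegrable_iff_integrableOn_Ioc_of_le (by norm_num : (0:ℝ) ≤ 1)]
      exact h2
    have hg : IntegrableOn (fun x : ℝ => max (2 ^ p) 1 * (1 - x) ^ p) (Ioo (0 : ℝ) 1) volume :=
      hsing.const_mul _
    refine hg.mono' (hcont.aestronglyMeasurable measurableSet_Ioo) ?_
    filter_upwards [ae_restrict_mem measurableSet_Ioo] with t ht
    obtain ⟨ht0, ht1⟩ := ht
    have h1t : (0:ℝ) ≤ 1 - t := by linarith
    have h1t' : (0:ℝ) ≤ 1 + t := by linarith
    have hnn : (0:ℝ) ≤ 1 - t ^ 2 := by nlinarith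
    rw [Real.norm_eq_abs, abs_of_nonneg (Real.rpow_nonneg hnn p),
        show (1:ℝ) - t ^ 2 = (1 - t) * (1 + t) by ring, Real.mul_rpow h1t h1t']
    have hb : (1 + t) ^ p ≤ max (2 ^ p) 1 := by
      rcases le_or_gt 0 p with hp' | hp'
      · exact le_trans (Real.rpow_le_rpow h1t' (by linarith) hp') (le_max_left _ _)
      · exact le_trans (Real.rpow_le_one_of_one_le_of_nonpos (by linarith) hp'.le)
          (le_max_right _ _)
    calc (1 - t) ^ p * (1 + t) ^ p ≤ (1 - t) ^ p * max (2 ^ p) 1 :=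
          mul_le_mul_of_nonneg_left hb (Real.rpow_nonneg h1t p)
      _ = max (2 ^ p) 1 * (1 - t) ^ p := by ring
  have hneg : IntegrableOn (fun t : ℝ => (1 - t ^ 2) ^ p) (Ioc (-1 : ℝ) 0) volume := by
    have h : IntervalIntegrable (fun t : ℝ => (1 - t ^ 2) ^ p) volume 0 1 := by
      rw [intervalIntegrable_iff_integrableOn_Ioc_of_le (by norm_num : (0:ℝ) ≤ 1)]
      exact h01
    have h2 := (h.comp_sub_left 0).symm
    simp only [zero_sub, sub_zero, sub_self, neg_sq] at h2
    rw [← intervalIntegrable_iff_integrableOn_Ioc_of_le (by norm_num : (-1:ℝ) ≤ 0)]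
    exact h2
  rw [show Ioc (-1 : ℝ) 1 = Ioc (-1) 0 ∪ Ioc 0 1 from
    (Ioc_union_Ioc_eq_Ioc (by norm_num) (by norm_num)).symm]
  exact hneg.union h01

lemma muMeasure_toReal {l : ℝ} (hl : -1 / 2 < l) {u : ℝ} (hu1 : -1 ≤ u) (hu2 : u ≤ 1) :
    (muMeasure l (Set.Icc (-1 : ℝ) 1 ∩ Set.Ioi u)).toReal
      = ∫ t in Ioc u 1, 2 * cConst (2 * l) * (1 - t ^ 2) ^ (l - 1 / 2) := by
  have hmeasS : MeasurableSet (Set.Icc (-1 : ℝ) 1 ∩ Set.Ioi u) :=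
    measurableSet_Icc.inter measurableSet_Ioi
  have hSet : (Set.Icc (-1 : ℝ) 1 ∩ Set.Ioi u) ∩ Set.Icc (-1 : ℝ) 1 = Ioc u 1 := by
    ext t
    simp only [mem_inter_iff, mem_Icc, mem_Ioi, mem_Ioc]
    constructor
    · rintro ⟨⟨⟨_, h⟩, h'⟩, _⟩; exact ⟨h', h⟩
    · rintro ⟨h', h⟩; exact ⟨⟨⟨le_trans hu1 h'.le, h⟩, h'⟩, le_trans hu1 h'.le, h⟩
  have hint : IntegrableOn (fun t : ℝ => 2 * cConst (2 * l) * (1 - t ^ 2) ^ (l - 1 / 2))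
      (Ioc u 1) volume :=
    ((integrableOn_base (p := l - 1 / 2) (by linarith)).mono_set
      (Ioc_subset_Ioc_left hu1)).const_mul _
  have hnn : 0 ≤ᵐ[volume.restrict (Ioc u 1)]
      fun t : ℝ => 2 * cConst (2 * l) * (1 - t ^ 2) ^ (l - 1 / 2) := by
    filter_upwards [ae_restrict_mem measurableSet_Ioc] with t ht
    have h1 : (0:ℝ) ≤ 1 - t ^ 2 := by nlinarith [ht.1, ht.2, lt_of_le_of_lt hu1 ht.1]
    have := cConst_pos (show (-1:ℝ) < 2 * l by linarith)
    exact mul_nonneg (by linarith) (Real.rpow_nonneg h1 _)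
  rw [muMeasure, withDensity_apply _ hmeasS, Measure.restrict_restrict hmeasS, hSet,
      ← ofReal_integral_eq_lintegral_ofReal hint hnn,
      ENNReal.toReal_ofReal (integral_nonneg_of_ae hnn)]

theorem stmt_16 (l : ℝ) (hl : -1 / 2 < l) :
    (∀ u ∈ Set.Icc (-1 : ℝ) 0,
      (muMeasure l (Set.Icc (-1 : ℝ) 1 ∩ Set.Ioi u)).toReal -
        (muMeasure (l + 1) (Set.Icc (-1 : ℝ) 1 ∩ Set.Ioi u)).toReal ≤ 0) ∧
    (∀ u ∈ Set.Icc (0 : ℝ) 1,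
      0 ≤ (muMeasure l (Set.Icc (-1 : ℝ) 1 ∩ Set.Ioi u)).toReal -
        (muMeasure (l + 1) (Set.Icc (-1 : ℝ) 1 ∩ Set.Ioi u)).toReal) := by
  set c : ℝ := cConst (2 * l) with hc
  set c' : ℝ := cConst (2 * (l + 1)) with hc'
  have hcpos : 0 < c := cConst_pos (by linarith)
  have hc'pos : 0 < c' := cConst_pos (by linarith)
  have hkey : c' * (l + 1 / 2) = c * (l + 1) := gamma_key hl
  set A : ℝ := 2 * c' - 2 * c with hA
  have hApos : 0 < A := by nlinarith
  have hA2 : A * (2 * l + 2) = 2 * c' := by linear_combination 4 * hkey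
  have main : ∀ u : ℝ, -1 ≤ u → u ≤ 1 →
      (muMeasure l (Set.Icc (-1 : ℝ) 1 ∩ Set.Ioi u)).toReal -
        (muMeasure (l + 1) (Set.Icc (-1 : ℝ) 1 ∩ Set.Ioi u)).toReal
        = A * (u * (1 - u ^ 2) ^ (l + 1 / 2)) := by
    intro u hu1 hu2
    have hint1 : IntegrableOn (fun t : ℝ => 2 * c * (1 - t ^ 2) ^ (l - 1 / 2))
        (Ioc u 1) volume :=
      ((integrableOn_base (p := l - 1 / 2) (by linarith)).mono_set
        (Ioc_subset_Ioc_left hu1)).const_mul _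
    have hint2 : IntegrableOn (fun t : ℝ => 2 * c' * (1 - t ^ 2) ^ (l + 1 / 2))
        (Ioc u 1) volume :=
      ((integrableOn_base (p := l + 1 / 2) (by linarith)).mono_set
        (Ioc_subset_Ioc_left hu1)).const_mul _
    have hcontF : Continuous fun t : ℝ => A * (t * (1 - t ^ 2) ^ (l + 1 / 2)) := by
      refine continuous_const.mul (continuous_id.mul ?_)
      rw [continuous_iff_continuousAt]
      intro t
      exact ((continuous_const.sub (continuous_pow 2)).continuousAt).rpow_const
        (Or.inr (by linarith))
    have hderiv : ∀ t ∈ Ioo u 1,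
        HasDerivAt (fun t : ℝ => A * (t * (1 - t ^ 2) ^ (l + 1 / 2)))
          (2 * c' * (1 - t ^ 2) ^ (l + 1 / 2) - 2 * c * (1 - t ^ 2) ^ (l - 1 / 2)) t := by
      intro t ht
      have ht1 : -1 < t := lt_of_le_of_lt hu1 ht.1
      have ht0 : (0:ℝ) < 1 - t ^ 2 := by nlinarith [ht.2]
      have hd1 : HasDerivAt (fun t : ℝ => 1 - t ^ 2) (-(2 * t)) t := by
        simpa using (hasDerivAt_pow 2 t).const_sub 1
      have hd2 := hd1.rpow_const (p := l + 1 / 2) (Or.inl ht0.ne')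
      have hd3 := ((hasDerivAt_id t).mul hd2).const_mul A
      convert hd3 using 1
      · rfl
      · rfl
      · rfl
      have hsplit : (1 - t ^ 2) ^ (l + 1 / 2) = (1 - t ^ 2) * (1 - t ^ 2) ^ (l - 1 / 2) := by
        rw [show l + 1 / 2 = 1 + (l - 1 / 2) by ring, Real.rpow_add ht0, Real.rpow_one]
      rw [show l + 1 / 2 - 1 = l - 1 / 2 by ring, hsplit]
      set X : ℝ := (1 - t ^ 2) ^ (l - 1 / 2) with hX
      simp only [id_eq]
      linear_combination (-X) * hA + (t ^ 2 * X) * hA2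
    have FTC : ∫ t in (u:ℝ)..1,
        (2 * c' * (1 - t ^ 2) ^ (l + 1 / 2) - 2 * c * (1 - t ^ 2) ^ (l - 1 / 2))
        = - (A * (u * (1 - u ^ 2) ^ (l + 1 / 2))) := by
      rw [intervalIntegral.integral_eq_sub_of_hasDeriv_right_of_le hu2
        hcontF.continuousOn (fun t ht => (hderiv t ht).hasDerivWithinAt) ?_]
      · rw [show (1:ℝ) - 1 ^ 2 = 0 by norm_num, Real.zero_rpow (by linarith : l + 1 / 2 ≠ 0)]
        ring
      · rw [intervalIntegrable_iff_integrableOn_Ioc_of_le hu2]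
        exact hint2.sub hint1
    rw [intervalIntegral.integral_of_le hu2,
        integral_sub hint2 hint1] at FTC
    rw [muMeasure_toReal hl hu1 hu2, muMeasure_toReal (by linarith : -1/2 < l + 1) hu1 hu2,
        show l + 1 - 1 / 2 = l + 1 / 2 by ring, ← hc, ← hc']
    linarith
  constructor
  · rintro u ⟨hu1, hu2⟩
    rw [main u hu1 (by linarith)]
    have hX : (0:ℝ) ≤ (1 - u ^ 2) ^ (l + 1 / 2) := Real.rpow_nonneg (by nlinarith) _
    exact mul_nonpos_iff.2 (Or.inl ⟨hApos.le, mul_nonpos_iff.2 (Or.inr ⟨hu2, hX⟩)⟩)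
  · rintro u ⟨hu1, hu2⟩
    rw [main u (by linarith) hu2]
    have hX : (0:ℝ) ≤ (1 - u ^ 2) ^ (l + 1 / 2) := Real.rpow_nonneg (by nlinarith) _
    positivity
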